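/- Let f : ℝⁿ → ℝ be differentiable with coordinate-wise Lipschitz gradient with constants L_1,…,L_n > 0. Then for every x ∈ ℝⁿ and every t ≥ 0, under uniform sampling of coordinates, (1/n)·∑_{i=1}^n min( f(x + t e_i), f(x − t e_i) ) ≤ f(x) − (t/n)·‖∇f(x)‖₁ + (t²/(2n))·∑_{i=1}^n L_i, where ‖∇f(x)‖₁ = ∑_{i=1}^n |∂_i f(x)|. -/

import Mathlib

lemma quad_bound (g g' : ℝ → ℝ) (L : ℝ)
    (hderiv : ∀ s, HasDerivAt g (g' s) s) (hc : Continuous g')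
    (hlip : ∀ s, |g' s - g' 0| ≤ L * |s|)
    (t : ℝ) (ht : 0 ≤ t) : g t ≤ g 0 + g' 0 * t + L * t ^ 2 / 2 := by
  have hint : ∫ s in (0:ℝ)..t, g' s = g t - g 0 :=
    intervalIntegral.integral_eq_sub_of_hasDerivAt (fun s _ => hderiv s)
      (hc.intervalIntegrable 0 t)
  have h1 : (∫ s in (0:ℝ)..t, (g' s - g' 0)) ≤ ∫ s in (0:ℝ)..t, L * s := by
    apply intervalIntegral.integral_mono_on ht
      ((hc.sub continuous_const).intervalIntegrable 0 t)
      ((continuous_const.mul continuous_id).intervalIntegrable 0 t)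
    intro s hs
    calc g' s - g' 0 ≤ |g' s - g' 0| := le_abs_self _
      _ ≤ L * |s| := hlip s
      _ = L * s := by rw [abs_of_nonneg hs.1]
  have h2 : (∫ s in (0:ℝ)..t, (g' s - g' 0)) = (g t - g 0) - g' 0 * t := by
    rw [intervalIntegral.integral_sub (hc.intervalIntegrable 0 t)
      intervalIntegrable_const, hint, intervalIntegral.integral_const]
    simp [smul_eq_mul]; ring
  have h3 : (∫ s in (0:ℝ)..t, L * s) = L * t ^ 2 / 2 := by
    rw [intervalIntegral.integral_const_mul, integral_id]
    ring
  linarith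

theorem stp_uniform_expected_decrease
    (n : ℕ) (hn : 0 < n) (f : (Fin n → ℝ) → ℝ) (hf : Differentiable ℝ f)
    (L : Fin n → ℝ) (hL : ∀ i, 0 < L i)
    (hlip : ∀ (i : Fin n) (x : Fin n → ℝ) (h : ℝ),
      |fderiv ℝ f (x + h • (Pi.single i 1 : Fin n → ℝ)) ((Pi.single i 1 : Fin n → ℝ))
          - fderiv ℝ f x ((Pi.single i 1 : Fin n → ℝ))| ≤ L i * |h|) :
    ∀ (x : Fin n → ℝ) (t : ℝ), 0 ≤ t →
      (1 / (n : ℝ)) * ∑ i, min (f (x + t • (Pi.single i 1 : Fin n → ℝ))) (f (x - t • (Pi.single i 1 : Fin n → ℝ)))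
        ≤ f x - (t / (n : ℝ)) * (∑ i, |fderiv ℝ f x ((Pi.single i 1 : Fin n → ℝ))|)
            + (t ^ 2 / (2 * (n : ℝ))) * ∑ i, L i := by
  intro x t ht
  set e : Fin n → (Fin n → ℝ) := fun i => (Pi.single i 1 : Fin n → ℝ) with he
  -- pointwise bound for each i
  have key : ∀ i : Fin n,
      min (f (x + t • e i)) (f (x - t • e i))
        ≤ f x - t * |fderiv ℝ f x (e i)| + L i * t ^ 2 / 2 := by
    intro i
    set g : ℝ → ℝ := fun h => f (x + h • e i) with hg
    set g' : ℝ → ℝ := fun h => fderiv ℝ f (x + h • e i) (e i) with hg'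
    have hd : ∀ s : ℝ, HasDerivAt g (g' s) s := by
      intro s
      have h1 : HasDerivAt (fun h : ℝ => x + h • e i) (e i) s := by
        simpa using ((hasDerivAt_id s).smul_const (e i)).const_add x
      exact ((hf (x + s • e i)).hasFDerivAt.comp_hasDerivAt s h1)
    have hlipg : ∀ u s : ℝ, |g' (u + s) - g' u| ≤ L i * |s| := by
      intro u s
      have := hlip i (x + u • e i) s
      simpa [hg', add_smul, add_assoc, add_comm] using this
    have hcg : Continuous g' := by
      have : LipschitzWith (Real.toNNReal (L i)) g' := by
        apply LipschitzWith.of_dist_le_mul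
        intro a b
        have := hlipg b (a - b)
        simp only [add_sub_cancel] at this
        rw [Real.dist_eq]
        calc |g' a - g' b| ≤ L i * |a - b| := this
          _ ≤ Real.toNNReal (L i) * |a - b| := by
              gcongr; exact Real.le_coe_toNNReal _
          _ = Real.toNNReal (L i) * dist a b := by rw [Real.dist_eq]
      exact this.continuous
    have hlip0 : ∀ s, |g' s - g' 0| ≤ L i * |s| := by
      intro s; simpa using hlipg 0 s
    have hplus : g t ≤ g 0 + g' 0 * t + L i * t ^ 2 / 2 :=
      quad_bound g g' (L i) hd hcg hlip0 t ht
    -- negative direction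
    set q : ℝ → ℝ := fun h => f (x - h • e i) with hq
    set q' : ℝ → ℝ := fun h => -(fderiv ℝ f (x - h • e i) (e i)) with hq'
    have hdq : ∀ s : ℝ, HasDerivAt q (q' s) s := by
      intro s
      have h1 : HasDerivAt (fun h : ℝ => x - h • e i) (-(e i)) s := by
        simpa using HasDerivAt.const_sub x ((hasDerivAt_id s).smul_const (e i))
      have := ((hf (x - s • e i)).hasFDerivAt.comp_hasDerivAt s h1)
      rw [map_neg] at this; exact this
    have hqeq : ∀ s : ℝ, q' s = -(g' (-s)) := by
      intro s; simp [hq', hg', sub_eq_add_neg, neg_smul]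
    have hlipq : ∀ s, |q' s - q' 0| ≤ L i * |s| := by
      intro s
      rw [hqeq s, hqeq 0, neg_sub_neg, abs_sub_comm]
      simpa using hlip0 (-s)
    have hcq : Continuous q' := by
      have : q' = fun s => -(g' (-s)) := funext hqeq
      rw [this]; exact (hcg.comp continuous_neg).neg
    have hminus : q t ≤ q 0 + q' 0 * t + L i * t ^ 2 / 2 :=
      quad_bound q q' (L i) hdq hcq hlipq t ht
    have hq0 : q 0 = f x := by simp [hq]
    have hg0 : g 0 = f x := by simp [hg]
    have hq'0 : q' 0 = -(g' 0) := by rw [hqeq]; simp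
    -- min ≤ f x - t|g' 0| + L t²/2
    rcases le_or_gt 0 (g' 0) with hge | hge
    · calc min (f (x + t • e i)) (f (x - t • e i)) ≤ q t := min_le_right _ _
        _ ≤ q 0 + q' 0 * t + L i * t ^ 2 / 2 := hminus
        _ = f x - t * |g' 0| + L i * t ^ 2 / 2 := by
            rw [hq0, hq'0, abs_of_nonneg hge]; ring
        _ = f x - t * |fderiv ℝ f x (e i)| + L i * t ^ 2 / 2 := by
            simp [hg']
    · calc min (f (x + t • e i)) (f (x - t • e i)) ≤ g t := min_le_left _ _
        _ ≤ g 0 + g' 0 * t + L i * t ^ 2 / 2 := hplus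
        _ = f x - t * |g' 0| + L i * t ^ 2 / 2 := by
            rw [hg0, abs_of_neg hge]; ring
        _ = f x - t * |fderiv ℝ f x (e i)| + L i * t ^ 2 / 2 := by
            simp [hg']
  have hsum := Finset.sum_le_sum (s := Finset.univ) (fun i _ => key i)
  have hnpos : (0:ℝ) < n := by exact_mod_cast hn
  rw [Finset.sum_add_distrib, Finset.sum_sub_distrib, Finset.sum_const,
    Finset.card_univ, Fintype.card_fin, ← Finset.mul_sum] at hsum
  have hfin : (∑ i, L i * t ^ 2 / 2) = t ^ 2 / 2 * ∑ i, L i := by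
    rw [Finset.mul_sum]; exact Finset.sum_congr rfl (fun i _ => by ring)
  rw [hfin] at hsum
  have h := mul_le_mul_of_nonneg_left hsum (le_of_lt (one_div_pos.mpr hnpos))
  refine le_trans h (le_of_eq ?_)
  rw [nsmul_eq_mul]
  field_simp
  ring
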